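/- Let (V, W, β) be a morphic triple and U a maximal subspace of V. Then the set {S : S maximal subspace of V, S' = U'} has exactly p + 1 elements, namely the maximal subspaces S of V containing T(U). -/

import Mathlib

open Module

variable {p : ℕ}

/-- The "derived" subspace `[U₁, U₂]`: the span of the values `β x y` for
`x ∈ U₁`, `y ∈ U₂`. -/
def pairSpan {V W : Type*} [AddCommGroup V] [Module (ZMod p) V]
    [AddCommGroup W] [Module (ZMod p) W]
    (β : V →ₗ[ZMod p] V →ₗ[ZMod p] W) (U₁ U₂ : Submodule (ZMod p) V) :
    Submodule (ZMod p) W :=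
  Submodule.span (ZMod p) {w | ∃ x ∈ U₁, ∃ y ∈ U₂, β x y = w}

/-- `U' = [U, U]`. -/
def der {V W : Type*} [AddCommGroup V] [Module (ZMod p) V]
    [AddCommGroup W] [Module (ZMod p) W]
    (β : V →ₗ[ZMod p] V →ₗ[ZMod p] W) (U : Submodule (ZMod p) V) :
    Submodule (ZMod p) W :=
  pairSpan β U U

/-- `(V, W, β)` is a morphic triple if `β` is alternating, `V' = W`, `U'` is a maximal
subspace of `W` for every maximal subspace `U` of `V`, and the intersection of all
such `U'` is zero. -/
def IsMorphicTriple {V W : Type*} [AddCommGroup V] [Module (ZMod p) V]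
    [AddCommGroup W] [Module (ZMod p) W]
    (β : V →ₗ[ZMod p] V →ₗ[ZMod p] W) : Prop :=
  (∀ v : V, β v v = 0) ∧
  der β ⊤ = ⊤ ∧
  (∀ U : Submodule (ZMod p) V, IsCoatom U → IsCoatom (der β U)) ∧
  (⨅ (U : Submodule (ZMod p) V) (_ : IsCoatom U), der β U) = ⊥

/-! ### Auxiliary lemmas -/

section Aux

lemma my_coatom_eq_of_le {α : Type*} [PartialOrder α] [OrderTop α] {x y : α}
    (hx : IsCoatom x) (hy : IsCoatom y) (h : x ≤ y) : x = y := by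
  by_contra hne
  exact hy.1 (hx.2 y (h.lt_of_ne hne))

variable {V : Type*} [AddCommGroup V] [Module (ZMod p) V]

/-- Modulo a maximal subspace, every vector is a multiple of a fixed vector outside. -/
lemma my_coatom_sub_smul [Fact p.Prime] {S : Submodule (ZMod p) V} (hS : IsCoatom S)
    {x : V} (hx : x ∉ S) (y : V) : ∃ c : ZMod p, y - c • x ∈ S := by
  have hlt : S < S ⊔ Submodule.span (ZMod p) {x} := by
    refine lt_of_le_of_ne le_sup_left fun h => hx ?_
    have hx' : x ∈ S ⊔ Submodule.span (ZMod p) {x} :=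
      Submodule.mem_sup_right (Submodule.mem_span_singleton_self x)
    rwa [← h] at hx'
  have htop := hS.2 _ hlt
  have hy : y ∈ S ⊔ Submodule.span (ZMod p) {x} := by rw [htop]; trivial
  obtain ⟨m, hm, z, hz, hmz⟩ := Submodule.mem_sup.mp hy
  obtain ⟨c, rfl⟩ := Submodule.mem_span_singleton.mp hz
  refine ⟨c, ?_⟩
  have : y - c • x = m := by rw [← hmz]; abel
  rwa [this]

/-- If `X` has the property that everything in `U` is congruent to a multiple of any
fixed element of `U \ X` modulo `X`, then there is nothing strictly between `X` and `U`. -/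
lemma my_max_of_complement {X U C : Submodule (ZMod p) V}
    (key : ∀ r ∈ U, r ∉ X → ∀ u ∈ U, ∃ c : ZMod p, u - c • r ∈ X)
    (hXC : X ≤ C) (hCU : C ≤ U) (hne : C ≠ X) : C = U := by
  obtain ⟨r, hrC, hrX⟩ : ∃ r ∈ C, r ∉ X := by
    by_contra h
    push_neg at h
    exact hne (le_antisymm h hXC)
  refine le_antisymm hCU fun u hu => ?_
  obtain ⟨c, hc⟩ := key r (hCU hrC) hrX u hu
  have hrepr : u = (u - c • r) + c • r := by abel
  rw [hrepr]
  exact add_mem (hXC hc) (Submodule.smul_mem _ _ hrC)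

lemma my_finrank_add_one_of_between [Fact p.Prime] [FiniteDimensional (ZMod p) V]
    {A B : Submodule (ZMod p) V} (hAB : A < B)
    (hmax : ∀ C, A ≤ C → C ≤ B → C = A ∨ C = B) :
    finrank (ZMod p) B = finrank (ZMod p) A + 1 := by
  obtain ⟨x, hxB, hxA⟩ := SetLike.exists_of_lt hAB
  have hx0 : x ≠ 0 := fun h => hxA (h ▸ A.zero_mem)
  have hspan : A ⊔ Submodule.span (ZMod p) {x} = B := by
    rcases hmax (A ⊔ Submodule.span (ZMod p) {x}) le_sup_left
        (sup_le hAB.le ((Submodule.span_singleton_le_iff_mem x B).mpr hxB)) with h | h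
    · exfalso
      have : x ∈ A ⊔ Submodule.span (ZMod p) {x} :=
        Submodule.mem_sup_right (Submodule.mem_span_singleton_self x)
      rw [h] at this
      exact hxA this
    · exact h
  have hdim := Submodule.finrank_sup_add_finrank_inf_eq A (Submodule.span (ZMod p) {x})
  rw [hspan, finrank_span_singleton hx0] at hdim
  have hlt := Submodule.finrank_lt_finrank_of_lt hAB
  have hinf : finrank (ZMod p) (A ⊓ Submodule.span (ZMod p) {x} : Submodule (ZMod p) V)
      ≤ finrank (ZMod p) A := Submodule.finrank_mono inf_le_left
  omega

/-- The maximal subspaces containing a given subspace `T` correspond to the maximal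
subspaces of the quotient `V ⧸ T`. -/
lemma my_ncard_coatoms_above (T : Submodule (ZMod p) V) :
    Set.ncard {S : Submodule (ZMod p) V | IsCoatom S ∧ T ≤ S}
      = Set.ncard {S : Submodule (ZMod p) (V ⧸ T) | IsCoatom S} := by
  have mc : ∀ q : Submodule (ZMod p) (V ⧸ T),
      Submodule.map T.mkQ (Submodule.comap T.mkQ q) = q := fun q => by
    rw [Submodule.map_comap_eq, Submodule.range_mkQ, top_inf_eq]
  have cm : ∀ s : Submodule (ZMod p) V, T ≤ s →
      Submodule.comap T.mkQ (Submodule.map T.mkQ s) = s := fun s hs => by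
    rw [Submodule.comap_map_eq, Submodule.ker_mkQ, sup_eq_left.mpr hs]
  have hTle : ∀ q : Submodule (ZMod p) (V ⧸ T), T ≤ Submodule.comap T.mkQ q := by
    intro q x hx
    have : T.mkQ x = 0 := by
      rw [Submodule.mkQ_apply, Submodule.Quotient.mk_eq_zero]
      exact hx
    show T.mkQ x ∈ q
    rw [this]
    exact q.zero_mem
  have himg : {S : Submodule (ZMod p) V | IsCoatom S ∧ T ≤ S}
      = (Submodule.comap T.mkQ) '' {S : Submodule (ZMod p) (V ⧸ T) | IsCoatom S} := by
    ext S
    simp only [Set.mem_setOf_eq, Set.mem_image]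
    constructor
    · rintro ⟨hS, hTS⟩
      refine ⟨Submodule.map T.mkQ S, ⟨?_, ?_⟩, cm S hTS⟩
      · intro h
        have := cm S hTS
        rw [h, Submodule.comap_top] at this
        exact hS.1 this.symm
      · intro D hD
        have h1 : S ≤ Submodule.comap T.mkQ D := by
          rw [← cm S hTS]
          exact Submodule.comap_mono hD.le
        have h2 : S ≠ Submodule.comap T.mkQ D := by
          intro h
          have hmapD : Submodule.map T.mkQ S = D := by rw [h, mc]
          exact hD.ne hmapD
        have htop : Submodule.comap T.mkQ D = ⊤ := hS.2 _ (h1.lt_of_ne h2)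
        rw [← mc D, htop, Submodule.map_top, Submodule.range_mkQ]
    · rintro ⟨q, hq, rfl⟩
      refine ⟨⟨?_, ?_⟩, hTle q⟩
      · intro h
        have := mc q
        rw [h, Submodule.map_top, Submodule.range_mkQ] at this
        exact hq.1 this.symm
      · intro C hC
        have h1 : q ≤ Submodule.map T.mkQ C := by
          rw [← mc q]
          exact Submodule.map_mono hC.le
        have h2 : q ≠ Submodule.map T.mkQ C := by
          intro h
          have hcm : Submodule.comap T.mkQ q = C := by
            rw [h, cm C (le_trans (hTle q) hC.le)]
          exact hC.ne hcm
        have htop : Submodule.map T.mkQ C = ⊤ := hq.2 _ (h1.lt_of_ne h2)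
        have hcm := cm C (le_trans (hTle q) hC.le)
        rw [htop, Submodule.comap_top] at hcm
        exact hcm.symm
  rw [himg]
  apply Set.ncard_image_of_injOn
  intro X _ Y _ h
  rw [← mc X, ← mc Y, h]

/-- A two-dimensional space over `ZMod p` has exactly `p + 1` maximal subspaces. -/
lemma my_ncard_coatoms_dim_two [Fact p.Prime] {Q : Type*} [AddCommGroup Q]
    [Module (ZMod p) Q] [FiniteDimensional (ZMod p) Q]
    (h2 : finrank (ZMod p) Q = 2) :
    Set.ncard {S : Submodule (ZMod p) Q | IsCoatom S} = p + 1 := by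
  classical
  let b : Basis (Fin 2) (ZMod p) Q := finBasisOfFinrankEq (ZMod p) Q h2
  have hb0 : b 0 ≠ 0 := b.ne_zero 0
  have hb1 : b 1 ≠ 0 := b.ne_zero 1
  -- a maximal subspace is exactly a 1-dimensional subspace
  have hcoatom : ∀ S : Submodule (ZMod p) Q, IsCoatom S ↔ finrank (ZMod p) S = 1 := by
    intro S
    constructor
    · intro hS
      have hlt : finrank (ZMod p) S < 2 := by
        rw [← h2]
        exact Submodule.finrank_lt hS.1
      have h01 : finrank (ZMod p) S = 0 ∨ finrank (ZMod p) S = 1 := by omega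
      rcases h01 with h0 | h1
      · exfalso
        have hbot : S = ⊥ := Submodule.finrank_eq_zero.mp h0
        have hlt' : S < Submodule.span (ZMod p) {b 0} := by
          rw [hbot]
          exact bot_lt_iff_ne_bot.mpr
            (fun h => hb0 (Submodule.span_singleton_eq_bot.mp h))
        have htop := hS.2 _ hlt'
        have := finrank_span_singleton (K := ZMod p) hb0
        rw [htop, finrank_top (ZMod p) Q, h2] at this
        omega
      · exact h1
    · intro h1
      constructor
      · intro htop
        rw [htop, finrank_top (ZMod p) Q, h2] at h1
        omega
      · intro C hC
        have hgt : 1 < finrank (ZMod p) C := by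
          rw [← h1]
          exact Submodule.finrank_lt_finrank_of_lt hC
        have hle : finrank (ZMod p) C ≤ 2 := h2 ▸ Submodule.finrank_le C
        exact Submodule.eq_top_of_finrank_eq (by omega)
  -- parametrize the lines by `Option (ZMod p)`
  let g : Option (ZMod p) → Submodule (ZMod p) Q := fun t =>
    match t with
    | none => Submodule.span (ZMod p) {b 1}
    | some c => Submodule.span (ZMod p) {b 0 + c • b 1}
  have hg0 : ∀ c : ZMod p, b 0 + c • b 1 ≠ 0 := by
    intro c h
    have := congrArg (fun v => b.repr v 0) h
    simp [Finsupp.single_apply] at this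
  have hgmem : ∀ t, g t ∈ {S : Submodule (ZMod p) Q | IsCoatom S} := by
    intro t
    rw [Set.mem_setOf_eq, hcoatom]
    cases t with
    | none => exact finrank_span_singleton hb1
    | some c => exact finrank_span_singleton (hg0 c)
  have hinj : Function.Injective g := by
    intro s t h
    cases s with
    | none =>
      cases t with
      | none => rfl
      | some c =>
        exfalso
        obtain ⟨z, hz⟩ := Submodule.span_singleton_eq_span_singleton.mp h
        have := congrArg (fun v => b.repr v 0) hz
        simp [Units.smul_def, Finsupp.single_apply] at this
    | some c =>
      cases t with
      | none =>
        exfalso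
        obtain ⟨z, hz⟩ := Submodule.span_singleton_eq_span_singleton.mp h
        have := congrArg (fun v => b.repr v 0) hz
        simp [Units.smul_def, Finsupp.single_apply] at this
      | some c' =>
        obtain ⟨z, hz⟩ := Submodule.span_singleton_eq_span_singleton.mp h
        have h0 := congrArg (fun v => b.repr v 0) hz
        have h1 := congrArg (fun v => b.repr v 1) hz
        simp [Finsupp.single_apply, Units.smul_def] at h0 h1
        rw [h0] at h1
        simp only [Units.val_one, one_mul] at h1
        exact congrArg some h1
  have hsurj : ∀ S ∈ {S : Submodule (ZMod p) Q | IsCoatom S}, ∃ t, g t = S := by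
    intro S hS
    rw [Set.mem_setOf_eq, hcoatom] at hS
    have hSbot : S ≠ ⊥ := by
      intro h
      rw [h] at hS
      simp at hS
    obtain ⟨x, hxS, hx0⟩ := S.ne_bot_iff.mp hSbot
    have hxspan : Submodule.span (ZMod p) {x} = S := by
      apply Submodule.eq_of_le_of_finrank_eq
      · exact (Submodule.span_singleton_le_iff_mem x S).mpr hxS
      · rw [finrank_span_singleton hx0, hS]
    obtain ⟨c0, c1, hxrepr⟩ : ∃ c0 c1 : ZMod p, x = c0 • b 0 + c1 • b 1 := by
      refine ⟨b.repr x 0, b.repr x 1, ?_⟩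
      have := b.sum_repr x
      rw [Fin.sum_univ_two] at this
      exact this.symm
    by_cases h0 : c0 = 0
    · refine ⟨none, ?_⟩
      have hx1 : c1 ≠ 0 := by
        intro h1
        apply hx0
        rw [hxrepr, h0, h1, zero_smul, zero_smul, add_zero]
      have hxc : x = c1 • b 1 := by rw [hxrepr, h0, zero_smul, zero_add]
      show Submodule.span (ZMod p) {b 1} = S
      rw [← hxspan, hxc, Submodule.span_singleton_smul_eq (IsUnit.mk0 _ hx1)]
    · refine ⟨some (c0⁻¹ * c1), ?_⟩
      have hx' : x = c0 • (b 0 + (c0⁻¹ * c1) • b 1) := by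
        rw [smul_add, smul_smul, mul_inv_cancel_left₀ h0, hxrepr]
      show Submodule.span (ZMod p) {b 0 + (c0⁻¹ * c1) • b 1} = S
      rw [← hxspan, hx', Submodule.span_singleton_smul_eq (IsUnit.mk0 _ h0)]
  have himg : {S : Submodule (ZMod p) Q | IsCoatom S} = g '' Set.univ := by
    ext S
    constructor
    · intro hS
      obtain ⟨t, ht⟩ := hsurj S hS
      exact ⟨t, trivial, ht⟩
    · rintro ⟨t, -, rfl⟩
      exact hgmem t
  rw [himg, Set.ncard_image_of_injOn (hinj.injOn), Set.ncard_univ, Finite.card_option,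
    Nat.card_zmod]

variable {W : Type*} [AddCommGroup W] [Module (ZMod p) W]
variable (β : V →ₗ[ZMod p] V →ₗ[ZMod p] W)

lemma my_mem_der {U : Submodule (ZMod p) V} {x y : V} (hx : x ∈ U) (hy : y ∈ U) :
    β x y ∈ der β U :=
  Submodule.subset_span ⟨x, hx, y, hy, rfl⟩

lemma my_skew (halt : ∀ v : V, β v v = 0) (x y : V) : β x y = -β y x := by
  have h := halt (x + y)
  simp only [map_add, LinearMap.add_apply, halt, zero_add, add_zero] at h
  rw [add_comm] at h
  exact eq_neg_of_add_eq_zero_left h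

lemma my_mem_der_expand {D : Submodule (ZMod p) W} {u w u' w' : V} (c c' : ZMod p)
    (h1 : β u u' ∈ D) (h2 : β u w' ∈ D) (h3 : β w u' ∈ D) (h4 : β w w' ∈ D) :
    β (u + c • w) (u' + c' • w') ∈ D := by
  have hexp : β (u + c • w) (u' + c' • w')
      = β u u' + c' • β u w' + c • β w u' + (c' * c) • β w w' := by
    simp only [map_add, map_smul, LinearMap.add_apply, LinearMap.smul_apply, smul_add,
      smul_smul]
    abel
  rw [hexp]
  exact add_mem (add_mem (add_mem h1 (Submodule.smul_mem _ _ h2))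
    (Submodule.smul_mem _ _ h3)) (Submodule.smul_mem _ _ h4)

section Morphic

variable [Fact p.Prime]

/-- There is an element of `U` not `β a`-mapped into `der β U`. -/
lemma my_exists_beta_not_mem (hβ : IsMorphicTriple β) {U : Submodule (ZMod p) V}
    (hU : IsCoatom U) {a : V} (ha : a ∉ U) : ∃ u ∈ U, β a u ∉ der β U := by
  by_contra hcon
  push_neg at hcon
  have key : der β (⊤ : Submodule (ZMod p) V) ≤ der β U := by
    refine Submodule.span_le.mpr ?_
    rintro w ⟨x, -, y, -, rfl⟩
    obtain ⟨c, hc⟩ := my_coatom_sub_smul hU ha x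
    obtain ⟨d, hd⟩ := my_coatom_sub_smul hU ha y
    have hx : x = (x - c • a) + c • a := by abel
    have hy : y = (y - d • a) + d • a := by abel
    rw [hx, hy]
    apply my_mem_der_expand β
    · exact my_mem_der β hc hd
    · rw [my_skew β hβ.1]
      exact neg_mem (hcon _ hc)
    · exact hcon _ hd
    · rw [hβ.1 a]
      exact (der β U).zero_mem
  have htop : der β U = ⊤ := top_unique (hβ.2.1 ▸ key)
  exact (hβ.2.2.1 U hU).1 htop

variable {β}

/-- The key property of `T = U ⊓ (β a)⁻¹(der β U)` inside `U`. -/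
lemma my_key_T (hβ : IsMorphicTriple β) {U : Submodule (ZMod p) V}
    (hU : IsCoatom U) (a : V) :
    ∀ r ∈ U, r ∉ U ⊓ Submodule.comap (β a) (der β U) → ∀ u ∈ U,
      ∃ c : ZMod p, u - c • r ∈ U ⊓ Submodule.comap (β a) (der β U) := by
  intro r hrU hrT u hu
  have hster : β a r ∉ der β U := by
    intro h
    exact hrT (Submodule.mem_inf.mpr ⟨hrU, h⟩)
  obtain ⟨c, hc⟩ := my_coatom_sub_smul (hβ.2.2.1 U hU) hster (β a u)
  refine ⟨c, Submodule.mem_inf.mpr ⟨sub_mem hu (Submodule.smul_mem _ _ hrU), ?_⟩⟩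
  show β a (u - c • r) ∈ der β U
  rw [map_sub, map_smul]
  exact hc

/-- The key property of `S ⊓ U` inside `U` for a maximal `S ≠ U`. -/
lemma my_key_R {U S : Submodule (ZMod p) V} (hS : IsCoatom S) :
    ∀ r ∈ U, r ∉ S ⊓ U → ∀ u ∈ U, ∃ c : ZMod p, u - c • r ∈ S ⊓ U := by
  intro r hrU hrR u hu
  have hrS : r ∉ S := fun h => hrR (Submodule.mem_inf.mpr ⟨h, hrU⟩)
  obtain ⟨c, hc⟩ := my_coatom_sub_smul hS hrS u
  exact ⟨c, Submodule.mem_inf.mpr ⟨hc, sub_mem hu (Submodule.smul_mem _ _ hrU)⟩⟩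

/-- If `S` is maximal and contains `T`, then `der β S = der β U`. -/
lemma my_der_eq_of_T_le (hβ : IsMorphicTriple β) {U : Submodule (ZMod p) V}
    (hU : IsCoatom U) {a : V} (ha : a ∉ U) {S : Submodule (ZMod p) V} (hS : IsCoatom S)
    (hTS : U ⊓ Submodule.comap (β a) (der β U) ≤ S) : der β S = der β U := by
  set T := U ⊓ Submodule.comap (β a) (der β U) with hTdef
  by_cases hSU : S = U
  · rw [hSU]
  have hSnleU : ¬S ≤ U := fun h => hSU (my_coatom_eq_of_le hS hU h)
  obtain ⟨b, hbS, hbU⟩ := SetLike.not_le_iff_exists.mp hSnleU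
  -- S ⊓ U = T
  have hinter : S ⊓ U = T := by
    by_contra hne
    have hEq : S ⊓ U = U := my_max_of_complement (my_key_T hβ hU a)
      (le_inf hTS inf_le_left) inf_le_right hne
    have hUS : U ≤ S := by rw [← hEq]; exact inf_le_left
    exact hSU (my_coatom_eq_of_le hU hS hUS).symm
  -- decompose b over U
  obtain ⟨μ, hμ⟩ := my_coatom_sub_smul hU ha b
  set u₀ := b - μ • a with hu₀def
  have hb : b = u₀ + μ • a := by rw [hu₀def]; abel
  have hle : der β S ≤ der β U := by
    refine Submodule.span_le.mpr ?_
    rintro w ⟨x, hx, y, hy, rfl⟩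
    obtain ⟨c, hc⟩ := my_coatom_sub_smul hU hbU x
    obtain ⟨c', hc'⟩ := my_coatom_sub_smul hU hbU y
    have hcT : x - c • b ∈ T := by
      rw [← hinter]
      exact Submodule.mem_inf.mpr ⟨sub_mem hx (Submodule.smul_mem _ _ hbS), hc⟩
    have hc'T : y - c' • b ∈ T := by
      rw [← hinter]
      exact Submodule.mem_inf.mpr ⟨sub_mem hy (Submodule.smul_mem _ _ hbS), hc'⟩
    have hcU : x - c • b ∈ U := hcT.1
    have hc'U : y - c' • b ∈ U := hc'T.1
    have hbmem : ∀ t ∈ T, β t b ∈ der β U := by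
      intro t ht
      have hid : β t b = β t u₀ - μ • β a t := by
        rw [hb, map_add, map_smul, my_skew β hβ.1 t a, smul_neg]
        abel
      rw [hid]
      exact sub_mem (my_mem_der β ht.1 hμ) (Submodule.smul_mem _ _ ht.2)
    have hbmem' : ∀ t ∈ T, β b t ∈ der β U := by
      intro t ht
      rw [my_skew β hβ.1]
      exact neg_mem (hbmem t ht)
    have hxrep : x = (x - c • b) + c • b := by abel
    have hyrep : y = (y - c' • b) + c' • b := by abel
    rw [hxrep, hyrep]
    apply my_mem_der_expand β
    · exact my_mem_der β hcU hc'U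
    · exact hbmem _ hcT
    · exact hbmem' _ hc'T
    · rw [hβ.1 b]
      exact (der β U).zero_mem
  exact my_coatom_eq_of_le (hβ.2.2.1 S hS) (hβ.2.2.1 U hU) hle

/-- If `S` is maximal and `der β S = der β U`, then `S` contains `T`. -/
lemma my_T_le_of_der_eq (hβ : IsMorphicTriple β) {U : Submodule (ZMod p) V}
    (hU : IsCoatom U) {a : V} (ha : a ∉ U) {S : Submodule (ZMod p) V} (hS : IsCoatom S)
    (hder : der β S = der β U) : U ⊓ Submodule.comap (β a) (der β U) ≤ S := by
  set T := U ⊓ Submodule.comap (β a) (der β U) with hTdef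
  by_cases hSU : S = U
  · rw [hSU]
    exact inf_le_left
  have hSnleU : ¬S ≤ U := fun h => hSU (my_coatom_eq_of_le hS hU h)
  obtain ⟨b, hbS, hbU⟩ := SetLike.not_le_iff_exists.mp hSnleU
  obtain ⟨μ, hμ⟩ := my_coatom_sub_smul hU ha b
  set u₀ := b - μ • a with hu₀def
  have hb : b = u₀ + μ • a := by rw [hu₀def]; abel
  have hμ0 : μ ≠ 0 := by
    intro h
    have hub : u₀ = b := by rw [hu₀def, h, zero_smul, sub_zero]
    rw [hub] at hμ
    exact hbU hμ
  -- S ⊓ U ≤ T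
  have hRT : S ⊓ U ≤ T := by
    intro r hr
    obtain ⟨hrS, hrU⟩ := Submodule.mem_inf.mp hr
    refine Submodule.mem_inf.mpr ⟨hrU, ?_⟩
    show β a r ∈ der β U
    have hbr : β b r ∈ der β U := hder ▸ my_mem_der β hbS hrS
    have hexp : β b r = β u₀ r + μ • β a r := by
      rw [hb]
      simp [map_add, map_smul]
    have hsmul : μ • β a r ∈ der β U := by
      have : μ • β a r = β b r - β u₀ r := by rw [hexp]; abel
      rw [this]
      exact sub_mem hbr (my_mem_der β hμ hrU)
    have := Submodule.smul_mem (der β U) μ⁻¹ hsmul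
    rwa [smul_smul, inv_mul_cancel₀ hμ0, one_smul] at this
  -- T ≠ U
  obtain ⟨u, huU, hund⟩ := my_exists_beta_not_mem β hβ hU ha
  have hTneU : T ≠ U := by
    intro h
    have huT : u ∈ T := by rw [h]; exact huU
    exact hund huT.2
  -- T = S ⊓ U by maximality of S ⊓ U in U
  have hTR : T = S ⊓ U := by
    by_contra hne
    exact hTneU (my_max_of_complement (my_key_R hS (U := U)) hRT inf_le_left hne)
  rw [hTR]
  exact inf_le_left

end Morphic

end Aux


/-- In a morphic triple, with `U` maximal in `V` and `a ∈ V \ U`, the set of maximal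
subspaces `S` of `V` with `S' = U'` has exactly `p + 1` elements, and consists of the
maximal subspaces of `V` containing `T(U) = {x ∈ U : [a,x] ∈ U'}`. -/
theorem card_fiber_der [Fact p.Prime]
    {V W : Type*} [AddCommGroup V] [Module (ZMod p) V] [FiniteDimensional (ZMod p) V]
    [AddCommGroup W] [Module (ZMod p) W] [FiniteDimensional (ZMod p) W]
    (β : V →ₗ[ZMod p] V →ₗ[ZMod p] W) (hβ : IsMorphicTriple β)
    (U : Submodule (ZMod p) V) (hU : IsCoatom U) (a : V) (ha : a ∉ U) :
    Set.ncard {S : Submodule (ZMod p) V | IsCoatom S ∧ der β S = der β U} = p + 1 ∧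
      {S : Submodule (ZMod p) V | IsCoatom S ∧ der β S = der β U}
        = {S : Submodule (ZMod p) V |
            IsCoatom S ∧ {x : V | x ∈ U ∧ β a x ∈ der β U} ⊆ (S : Set V)} := by
  classical
  set T : Submodule (ZMod p) V := U ⊓ Submodule.comap (β a) (der β U) with hTdef
  have hsetT : {x : V | x ∈ U ∧ β a x ∈ der β U} = (T : Set V) := by
    ext x
    simp [hTdef, Submodule.mem_inf]
  have hmain : {S : Submodule (ZMod p) V | IsCoatom S ∧ der β S = der β U}
      = {S : Submodule (ZMod p) V | IsCoatom S ∧ T ≤ S} := by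
    ext S
    simp only [Set.mem_setOf_eq]
    constructor
    · rintro ⟨hS, hd⟩
      exact ⟨hS, my_T_le_of_der_eq hβ hU ha hS hd⟩
    · rintro ⟨hS, hle⟩
      exact ⟨hS, my_der_eq_of_T_le hβ hU ha hS hle⟩
  constructor
  · -- the cardinality
    obtain ⟨u, huU, hund⟩ := my_exists_beta_not_mem β hβ hU ha
    have hTneU : T ≠ U := by
      intro h
      have huT : u ∈ T := by rw [h]; exact huU
      exact hund huT.2
    have hTU : T < U := lt_of_le_of_ne inf_le_left hTneU
    have h1 : finrank (ZMod p) U = finrank (ZMod p) T + 1 := by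
      apply my_finrank_add_one_of_between hTU
      intro C hTC hCU
      by_cases h : C = T
      · exact Or.inl h
      · exact Or.inr (my_max_of_complement (my_key_T hβ hU a) hTC hCU h)
    have h2 : finrank (ZMod p) (⊤ : Submodule (ZMod p) V) = finrank (ZMod p) U + 1 := by
      apply my_finrank_add_one_of_between (lt_top_iff_ne_top.mpr hU.1)
      intro C hUC _
      by_cases h : C = U
      · exact Or.inl h
      · exact Or.inr (hU.2 C (hUC.lt_of_ne (Ne.symm h)))
    rw [finrank_top (ZMod p) V] at h2
    have hq := Submodule.finrank_quotient_add_finrank T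
    have hq2 : finrank (ZMod p) (V ⧸ T) = 2 := by omega
    rw [hmain, my_ncard_coatoms_above T, my_ncard_coatoms_dim_two hq2]
  · -- the set identification
    rw [hmain]
    ext S
    simp only [Set.mem_setOf_eq, hsetT, SetLike.coe_subset_coe]
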